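/- Let p be a real polynomial of degree d ≥ 1 with |p(x)| ≤ 1 for all integers x ∈ {0, 1, ..., k}, where k ≥ 1. If max_{x ∈ [0,k]} |p(x)| ≥ 1.001, then d ≥ sqrt(0.001 k / 2.002). -/

import Mathlib

open Polynomial Finset Real

namespace MarkovAux

lemma T_eval_one (n : ℕ) : (Polynomial.Chebyshev.T ℝ n).eval 1 = 1 := by
  induction n using Nat.twoStepInduction with
  | zero => simp [Polynomial.Chebyshev.T_zero]
  | one => simp [Polynomial.Chebyshev.T_one]
  | more n ih1 ih2 =>
    have h := Polynomial.Chebyshev.T_add_two ℝ n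
    have e2 : ((n : ℤ) + 2) = ((n + 2 : ℕ) : ℤ) := by push_cast; ring
    have e1 : ((n : ℤ) + 1) = ((n + 1 : ℕ) : ℤ) := by push_cast; ring
    rw [e2, e1] at h
    rw [h]
    simp [ih1, ih2]
    norm_num

lemma T_deriv_eval_one (n : ℕ) :
    (Polynomial.derivative (Polynomial.Chebyshev.T ℝ n)).eval 1 = (n : ℝ) ^ 2 := by
  induction n using Nat.twoStepInduction with
  | zero => simp [Polynomial.Chebyshev.T_zero]
  | one => simp [Polynomial.Chebyshev.T_one]
  | more n ih1 ih2 =>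
    have h := Polynomial.Chebyshev.T_add_two ℝ n
    have e2 : ((n : ℤ) + 2) = ((n + 2 : ℕ) : ℤ) := by push_cast; ring
    have e1 : ((n : ℤ) + 1) = ((n + 1 : ℕ) : ℤ) := by push_cast; ring
    rw [e2, e1] at h
    rw [h]
    simp only [Polynomial.derivative_sub, Polynomial.derivative_mul, Polynomial.derivative_X,
      Polynomial.eval_sub, Polynomial.eval_mul, Polynomial.eval_add, Polynomial.eval_X,
      Polynomial.eval_ofNat, Polynomial.derivative_ofNat, Polynomial.eval_zero, Polynomial.eval_one]
    rw [ih1, ih2, T_eval_one]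
    push_cast
    ring

lemma T_natDegree_le (n : ℕ) : (Polynomial.Chebyshev.T ℝ n).natDegree ≤ n := by
  induction n using Nat.twoStepInduction with
  | zero => simp [Polynomial.Chebyshev.T_zero]
  | one => simp [Polynomial.Chebyshev.T_one]
  | more n ih1 ih2 =>
    have h := Polynomial.Chebyshev.T_add_two ℝ n
    have e2 : ((n : ℤ) + 2) = ((n + 2 : ℕ) : ℤ) := by push_cast; ring
    have e1 : ((n : ℤ) + 1) = ((n + 1 : ℕ) : ℤ) := by push_cast; ring
    rw [e2, e1] at h
    rw [h]
    refine le_trans (Polynomial.natDegree_sub_le _ _) ?_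
    simp only [max_le_iff]
    constructor
    · refine le_trans (Polynomial.natDegree_mul_le) ?_
      have h2 : (2 * Polynomial.X : Polynomial ℝ).natDegree ≤ 1 := by
        refine le_trans (Polynomial.natDegree_mul_le) ?_
        simp
      omega
    · omega

lemma derivative_finset_prod (t : Finset ℕ) (f : ℕ → Polynomial ℝ) :
    Polynomial.derivative (∏ j ∈ t, f j)
      = ∑ b ∈ t, (∏ j ∈ t.erase b, f j) * Polynomial.derivative (f b) := by
  classical
  induction t using Finset.induction_on with
  | empty => simp
  | @insert a s h ih =>
    rw [Finset.prod_insert h, Polynomial.derivative_mul, ih, Finset.mul_sum,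
      Finset.sum_insert h, Finset.erase_insert h]
    congr 1
    · exact mul_comm _ _
    refine Finset.sum_congr rfl fun b hb => ?_
    have hba : b ≠ a := fun e => h (e ▸ hb)
    rw [Finset.erase_insert_of_ne hba.symm, Finset.prod_insert (fun e => h (Finset.mem_of_mem_erase e)),
      ← mul_assoc]


lemma markov_endpoint (d : ℕ) (hd : 1 ≤ d) (q : Polynomial ℝ) (hq : q.natDegree ≤ d)
    (M : ℝ) (hM : ∀ t ∈ Set.Icc (-1:ℝ) 1, |q.eval t| ≤ M) :
    |(Polynomial.derivative q).eval 1| ≤ (d:ℝ)^2 * M := by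
  classical
  have hd0 : (0:ℝ) < d := by exact_mod_cast hd
  set v : ℕ → ℝ := fun i => Real.cos (i * π / d) with hv
  set s : Finset ℕ := Finset.range (d+1) with hs
  have hθ : ∀ i ∈ s, (i:ℝ) * π / d ∈ Set.Icc 0 π := by
    intro i hi
    rw [hs, Finset.mem_range] at hi
    have hile : (i:ℝ) ≤ d := by exact_mod_cast Nat.lt_succ_iff.mp hi
    constructor
    · positivity
    · rw [div_le_iff₀ hd0]
      nlinarith [Real.pi_pos]
  have hanti : ∀ i ∈ s, ∀ j ∈ s, i < j → v j < v i := by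
    intro i hi j hj hij
    have hij' : (i:ℝ) * π / d < (j:ℝ) * π / d := by
      have h1 : (i:ℝ) < j := by exact_mod_cast hij
      have := Real.pi_pos
      gcongr
    exact Real.strictAntiOn_cos (hθ i hi) (hθ j hj) hij'
  have hinj : Set.InjOn v s := by
    intro i hi j hj hvij
    rw [Finset.mem_coe] at hi hj
    rcases lt_trichotomy i j with h | h | h
    · exact absurd hvij (ne_of_gt (hanti i hi j hj h))
    · exact h
    · exact absurd hvij (ne_of_lt (hanti j hj i hi h))
  have hmem : ∀ i : ℕ, v i ∈ Set.Icc (-1:ℝ) 1 :=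
    fun i => ⟨Real.neg_one_le_cos _, Real.cos_le_one _⟩
  set B : ℕ → ℝ := fun i => (Polynomial.derivative (Lagrange.basis s v i)).eval 1 with hB
  have hderB : ∀ x y : ℝ, Polynomial.derivative (Lagrange.basisDivisor x y)
      = Polynomial.C (x - y)⁻¹ := by
    intro x y; simp [Lagrange.basisDivisor]
  have hevalB : ∀ x y : ℝ, (Lagrange.basisDivisor x y).eval 1 = (x - y)⁻¹ * (1 - y) := by
    intro x y; simp [Lagrange.basisDivisor]
  have hBform : ∀ i, B i = ∑ b ∈ s.erase i,
      (∏ j ∈ (s.erase i).erase b, (v i - v j)⁻¹ * (1 - v j)) * (v i - v b)⁻¹ := by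
    intro i
    show (Polynomial.derivative (∏ j ∈ s.erase i, Lagrange.basisDivisor (v i) (v j))).eval 1 = _
    rw [derivative_finset_prod, Polynomial.eval_finset_sum]
    refine Finset.sum_congr rfl fun b hb => ?_
    rw [Polynomial.eval_mul, Polynomial.eval_prod, hderB, Polynomial.eval_C]
    congr 1
    exact Finset.prod_congr rfl fun j _ => hevalB _ _
  have h11 : ∀ i : ℕ, (-1:ℝ)^i * (-1:ℝ)^i = 1 := by
    intro i; rw [← pow_add]; exact Even.neg_one_pow ⟨i, rfl⟩
  have hP : ∀ i ∈ s, 0 < (-1:ℝ)^i * ∏ j ∈ s.erase i, (v i - v j) := by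
    intro i hi
    have hid : i < d + 1 := by rwa [hs, Finset.mem_range] at hi
    have hsplit : s.erase i = Finset.range i ∪ Finset.Ico (i+1) (d+1) := by
      rw [hs]; ext a
      simp only [Finset.mem_erase, Finset.mem_range, Finset.mem_union, Finset.mem_Ico]
      omega
    have hdisj : Disjoint (Finset.range i) (Finset.Ico (i+1) (d+1)) := by
      rw [Finset.disjoint_left]
      intro a ha hb
      rw [Finset.mem_range] at ha
      rw [Finset.mem_Ico] at hb
      omega
    rw [hsplit, Finset.prod_union hdisj]
    have h1 : ∏ j ∈ Finset.range i, (v i - v j)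
        = (-1:ℝ)^i * ∏ j ∈ Finset.range i, (v j - v i) := by
      have hcg : ∀ j ∈ Finset.range i, v i - v j = (-1) * (v j - v i) := fun j _ => by ring
      rw [Finset.prod_congr rfl hcg, Finset.prod_mul_distrib, Finset.prod_const,
        Finset.card_range]
    rw [h1]
    have hpos1 : 0 < ∏ j ∈ Finset.range i, (v j - v i) := by
      apply Finset.prod_pos
      intro j hj
      have hji : j < i := Finset.mem_range.mp hj
      have hjs : j ∈ s := by rw [hs]; exact Finset.mem_range.mpr (by omega)
      have := hanti j hjs i hi hji
      linarith
    have hpos2 : 0 < ∏ j ∈ Finset.Ico (i+1) (d+1), (v i - v j) := by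
      apply Finset.prod_pos
      intro j hj
      rw [Finset.mem_Ico] at hj
      have hjs : j ∈ s := by rw [hs]; exact Finset.mem_range.mpr hj.2
      have := hanti i hi j hjs (by omega)
      linarith
    calc (0:ℝ) < (∏ j ∈ Finset.range i, (v j - v i))
          * ∏ j ∈ Finset.Ico (i+1) (d+1), (v i - v j) := mul_pos hpos1 hpos2
      _ = (-1:ℝ)^i * ((-1:ℝ)^i * (∏ j ∈ Finset.range i, (v j - v i))
          * ∏ j ∈ Finset.Ico (i+1) (d+1), (v i - v j)) := by
        rw [← mul_assoc, ← mul_assoc, h11 i, one_mul]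
  have hBsign : ∀ i ∈ s, 0 ≤ (-1:ℝ)^i * B i := by
    intro i hi
    rw [hBform i, Finset.mul_sum]
    apply Finset.sum_nonneg
    intro b hb
    rw [Finset.prod_mul_distrib]
    have hkey : (∏ j ∈ (s.erase i).erase b, (v i - v j)⁻¹) * (v i - v b)⁻¹
        = (∏ j ∈ s.erase i, (v i - v j))⁻¹ := by
      rw [Finset.prod_erase_mul _ _ hb, Finset.prod_inv_distrib]
    have h2 : 0 ≤ ∏ j ∈ (s.erase i).erase b, (1 - v j) :=
      Finset.prod_nonneg (fun j _ => by have := (hmem j).2; linarith)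
    have h3 : 0 < (-1:ℝ)^i * (∏ j ∈ s.erase i, (v i - v j))⁻¹ := by
      have hp := hP i hi
      have h4 : 0 < ((-1:ℝ)^i * ∏ j ∈ s.erase i, (v i - v j))⁻¹ := inv_pos.mpr hp
      rw [mul_inv] at h4
      rwa [← inv_pow, inv_neg, inv_one] at h4
    have hre : (-1:ℝ)^i * ((∏ j ∈ (s.erase i).erase b, (v i - v j)⁻¹)
          * (∏ j ∈ (s.erase i).erase b, (1 - v j)) * (v i - v b)⁻¹)
        = ((-1:ℝ)^i * (∏ j ∈ s.erase i, (v i - v j))⁻¹)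
          * ∏ j ∈ (s.erase i).erase b, (1 - v j) := by
      rw [← hkey]; ring
    rw [hre]
    exact mul_nonneg h3.le h2
  have hcard : (#s) = d + 1 := Finset.card_range _
  have hsum : ∀ f : Polynomial ℝ, f.natDegree ≤ d →
      (Polynomial.derivative f).eval 1 = ∑ i ∈ s, f.eval (v i) * B i := by
    intro f hf
    have hdeg : f.degree < (#s : ℕ) := by
      refine lt_of_le_of_lt f.degree_le_natDegree ?_
      rw [hcard]
      exact_mod_cast Nat.lt_succ_of_le hf
    conv_lhs => rw [Lagrange.eq_interpolate hinj hdeg]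
    rw [Lagrange.interpolate_apply, Polynomial.derivative_sum, Polynomial.eval_finset_sum]
    refine Finset.sum_congr rfl fun i hi => ?_
    rw [Polynomial.derivative_C_mul, Polynomial.eval_mul, Polynomial.eval_C]
  have hTsum : ∑ i ∈ s, (-1:ℝ)^i * B i = (d:ℝ)^2 := by
    have h := hsum (Polynomial.Chebyshev.T ℝ d) (T_natDegree_le d)
    rw [T_deriv_eval_one] at h
    rw [h]
    refine Finset.sum_congr rfl fun i hi => ?_
    congr 1
    have hTv : (Polynomial.Chebyshev.T ℝ d).eval (v i) = (-1:ℝ)^i := by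
      rw [hv]
      simp only []
      rw [Polynomial.Chebyshev.T_real_cos]
      have harg : ((d:ℤ):ℝ) * ((i:ℝ) * π / d) = (i:ℝ) * π - 0 := by
        push_cast
        field_simp
        ring
      rw [harg, Real.cos_nat_mul_pi_sub 0]
      simp
    rw [hTv]
  have hM0 : 0 ≤ M := le_trans (abs_nonneg _) (hM 1 ⟨by norm_num, le_refl 1⟩)
  calc |(Polynomial.derivative q).eval 1| = |∑ i ∈ s, q.eval (v i) * B i| := by rw [hsum q hq]
    _ ≤ ∑ i ∈ s, |q.eval (v i) * B i| := Finset.abs_sum_le_sum_abs _ _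
    _ ≤ ∑ i ∈ s, M * ((-1:ℝ)^i * B i) := by
        refine Finset.sum_le_sum fun i hi => ?_
        rw [abs_mul]
        have habs : |B i| = (-1:ℝ)^i * B i := by
          have hsg := hBsign i hi
          have he : |(-1:ℝ)^i * B i| = |B i| := by
            rw [abs_mul, abs_pow, abs_neg, abs_one, one_pow, one_mul]
          rw [← he, abs_of_nonneg hsg]
        rw [habs]
        exact mul_le_mul_of_nonneg_right (hM _ (hmem i)) (hBsign i hi)
    _ = M * ∑ i ∈ s, (-1:ℝ)^i * B i := by rw [Finset.mul_sum]
    _ = (d:ℝ)^2 * M := by rw [hTsum, mul_comm]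

lemma markov_affine (p : Polynomial ℝ) (d : ℕ) (hd : 1 ≤ d) (hdeg : p.natDegree ≤ d)
    (c₁ c₂ : ℝ) (hc : c₂ ≠ 0) (M : ℝ)
    (hM : ∀ t ∈ Set.Icc (-1:ℝ) 1, |p.eval (c₁ + c₂ * t)| ≤ M) :
    |c₂| * |(Polynomial.derivative p).eval (c₁ + c₂)| ≤ (d:ℝ)^2 * M := by
  set r : Polynomial ℝ := Polynomial.C c₂ * Polynomial.X + Polynomial.C c₁ with hr
  set q : Polynomial ℝ := p.comp r with hq
  have hrdeg : r.natDegree = 1 := Polynomial.natDegree_linear hc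
  have hqdeg : q.natDegree ≤ d := by
    rw [hq, Polynomial.natDegree_comp, hrdeg, mul_one]; exact hdeg
  have hqev : ∀ t : ℝ, q.eval t = p.eval (c₁ + c₂ * t) := by
    intro t
    rw [hq, Polynomial.eval_comp]
    congr 1
    rw [hr]
    simp
    ring
  have h := markov_endpoint d hd q hqdeg M (by intro t ht; rw [hqev]; exact hM t ht)
  have hder : (Polynomial.derivative q).eval 1
      = c₂ * (Polynomial.derivative p).eval (c₁ + c₂) := by
    have hdr : Polynomial.derivative r = Polynomial.C c₂ := by rw [hr]; simp
    have hrev : r.eval 1 = c₂ + c₁ := by rw [hr]; simp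
    rw [hq, Polynomial.derivative_comp, Polynomial.eval_mul, Polynomial.eval_comp, hdr, hrev,
      Polynomial.eval_C, add_comm c₂ c₁]
  rw [hder, abs_mul] at h
  exact h

set_option maxHeartbeats 1000000 in
theorem markov_corollary'
    (p : Polynomial ℝ) (d k : ℕ)
    (hd : p.natDegree = d) (hd1 : 1 ≤ d) (hk : 1 ≤ k)
    (hbound : ∀ j : ℕ, j ≤ k → |p.eval (j : ℝ)| ≤ 1)
    (hbig : ∃ x ∈ Set.Icc (0 : ℝ) k, |p.eval x| ≥ 1.001) :
    (d : ℝ) ≥ Real.sqrt (0.001 * k / 2.002) := by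
  have hk0 : (0:ℝ) < k := by exact_mod_cast hk
  obtain ⟨x₀, hx₀mem, hx₀max'⟩ :=
    isCompact_Icc.exists_isMaxOn (Set.nonempty_Icc.mpr hk0.le)
      ((Polynomial.continuous p).abs.continuousOn :
        ContinuousOn (fun x => |p.eval x|) (Set.Icc (0:ℝ) k))
  have hx₀max : ∀ y ∈ Set.Icc (0:ℝ) k, |p.eval y| ≤ |p.eval x₀| := fun y hy => hx₀max' hy
  set M : ℝ := |p.eval x₀| with hMdef
  obtain ⟨xb, hxbmem, hxbbig⟩ := hbig
  have hM1 : (1.001:ℝ) ≤ M := le_trans hxbbig (hx₀max xb hxbmem)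
  have hMpos : (0:ℝ) < M := lt_of_lt_of_le (by norm_num) hM1
  set z : ℤ := round x₀ with hzdef
  have hz : |x₀ - (z:ℝ)| ≤ 1/2 := abs_sub_round x₀
  have hzabs := abs_le.mp hz
  have hx0 : 0 ≤ x₀ := hx₀mem.1
  have hxk : x₀ ≤ (k:ℝ) := hx₀mem.2
  have hz0 : 0 ≤ z := by
    by_contra h
    push_neg at h
    have h2 : z ≤ -1 := by omega
    have h' : (z:ℝ) ≤ -1 := by exact_mod_cast h2
    linarith [hzabs.2]
  have hzk : z ≤ (k:ℤ) := by
    by_contra h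
    push_neg at h
    have h' : ((k:ℤ):ℝ) + 1 ≤ (z:ℝ) := by exact_mod_cast Int.lt_iff_add_one_le.mp h
    push_cast at h'
    linarith [hzabs.1]
  set jn : ℕ := z.toNat with hjndef
  have hjn : (jn:ℝ) = (z:ℝ) := by
    have : (jn:ℤ) = z := Int.toNat_of_nonneg hz0
    exact_mod_cast this
  have hjnk : jn ≤ k := by omega
  have hjn0 : (0:ℝ) ≤ jn := by positivity
  have hjnkR : (jn:ℝ) ≤ k := by exact_mod_cast hjnk
  have hpj : |p.eval (jn:ℝ)| ≤ 1 := hbound jn hjnk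
  have hclose : |x₀ - (jn:ℝ)| ≤ 1/2 := by rw [hjn]; exact hz
  have hne : x₀ ≠ (jn:ℝ) := by
    intro he
    have : M ≤ 1 := by rw [hMdef, he]; exact hpj
    linarith
  have hnum : M - 1 ≤ |p.eval (jn:ℝ) - p.eval x₀| := by
    have h1 := abs_sub_abs_le_abs_sub (p.eval x₀) (p.eval (jn:ℝ))
    rw [abs_sub_comm (p.eval x₀)] at h1
    linarith
  obtain ⟨ξ, hξmem, hξ⟩ : ∃ ξ ∈ Set.Icc (0:ℝ) k, 2*(M-1) ≤ |(Polynomial.derivative p).eval ξ| := by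
    rcases lt_or_gt_of_ne hne with hlt | hgt
    · obtain ⟨c, hc, hcs⟩ := exists_hasDerivAt_eq_slope (fun x => p.eval x)
        (fun x => (Polynomial.derivative p).eval x) hlt
        ((Polynomial.continuous p).continuousOn) (fun x _ => Polynomial.hasDerivAt p x)
      refine ⟨c, ⟨by linarith [hc.1], by linarith [hc.2]⟩, ?_⟩
      rw [hcs, abs_div]
      have hden : |(jn:ℝ) - x₀| ≤ 1/2 := by rw [abs_sub_comm]; exact hclose
      have hdenpos : 0 < |(jn:ℝ) - x₀| := abs_pos.mpr (by intro h0; exact hne (by linarith [sub_eq_zero.mp h0]))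
      rw [le_div_iff₀ hdenpos]
      nlinarith [hnum, hM1]
    · obtain ⟨c, hc, hcs⟩ := exists_hasDerivAt_eq_slope (fun x => p.eval x)
        (fun x => (Polynomial.derivative p).eval x) hgt
        ((Polynomial.continuous p).continuousOn) (fun x _ => Polynomial.hasDerivAt p x)
      refine ⟨c, ⟨by linarith [hc.1], by linarith [hc.2]⟩, ?_⟩
      rw [hcs, abs_div]
      have hden : |x₀ - (jn:ℝ)| ≤ 1/2 := hclose
      have hdenpos : 0 < |x₀ - (jn:ℝ)| := abs_pos.mpr (sub_ne_zero.mpr hne)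
      rw [le_div_iff₀ hdenpos]
      have hnum' : M - 1 ≤ |p.eval x₀ - p.eval (jn:ℝ)| := by
        rw [abs_sub_comm]; exact hnum
      nlinarith [hnum', hM1]
  have hd' : p.natDegree ≤ d := le_of_eq hd
  have hk4 : (0:ℝ) < k/4 := by positivity
  have hkey : (k/4) * |(Polynomial.derivative p).eval ξ| ≤ (d:ℝ)^2 * M := by
    rcases le_or_gt ξ ((k:ℝ)/2) with hle | hgt
    · have h := markov_affine p d hd1 hd' (ξ + k/4) (-(k/4)) (by intro h0; rw [neg_eq_zero] at h0; linarith) M ?_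
      · have he : ξ + (k:ℝ)/4 + -((k:ℝ)/4) = ξ := by ring
        rw [he, abs_neg, abs_of_pos hk4] at h
        exact h
      · intro t ht
        have hb1 : (k:ℝ)/4*t ≤ (k:ℝ)/4 := by
          have := mul_le_mul_of_nonneg_left ht.2 hk4.le; simpa using this
        have hb2 : -((k:ℝ)/4) ≤ (k:ℝ)/4*t := by
          have := mul_le_mul_of_nonneg_left ht.1 hk4.le; linarith [this]
        apply hx₀max
        constructor
        · linarith [hb1, hb2, hξmem.1]
        · linarith [hb1, hb2, hξmem.1, hle]
    · have h := markov_affine p d hd1 hd' (ξ - k/4) (k/4) (by positivity) M ?_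
      · have he : ξ - (k:ℝ)/4 + (k:ℝ)/4 = ξ := by ring
        rw [he, abs_of_pos hk4] at h
        exact h
      · intro t ht
        have hb1 : (k:ℝ)/4*t ≤ (k:ℝ)/4 := by
          have := mul_le_mul_of_nonneg_left ht.2 hk4.le; simpa using this
        have hb2 : -((k:ℝ)/4) ≤ (k:ℝ)/4*t := by
          have := mul_le_mul_of_nonneg_left ht.1 hk4.le; linarith [this]
        apply hx₀max
        constructor
        · linarith [hb1, hb2, hgt]
        · linarith [hb1, hb2, hξmem.2]
  have hstep : (k/4) * (2*(M-1)) ≤ (d:ℝ)^2 * M :=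
    le_trans (mul_le_mul_of_nonneg_left hξ hk4.le) hkey
  have hfin : (0.001 * k / 2.002 : ℝ) ≤ (d:ℝ)^2 := by
    have heq : (0.001 * (k:ℝ) / 2.002) = (k:ℝ)/2002 := by norm_num; ring
    have hM1' : (1001:ℝ)/1000 ≤ M := by
      rw [show (1001:ℝ)/1000 = 1.001 by norm_num]; exact hM1
    rw [heq]
    by_contra hno
    push_neg at hno
    have hC := mul_lt_mul_of_pos_right hno hMpos
    have hA : (0:ℝ) ≤ (M - 1)/2 - M/2002 := by linarith
    have hB : (0:ℝ) ≤ (k:ℝ) * ((M-1)/2 - M/2002) := mul_nonneg hk0.le hA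
    linarith [hstep, hC, hB]
  have hs := Real.sqrt_le_sqrt hfin
  rwa [Real.sqrt_sq (by positivity : (0:ℝ) ≤ (d:ℝ))] at hs

end MarkovAux

/-- If `p` has degree `d ≥ 1`, is bounded by 1 in absolute value at all integers
`{0, 1, …, k}` (`k ≥ 1`), and attains absolute value at least `1.001` somewhere on `[0, k]`,
then `d ≥ sqrt(0.001·k / 2.002)`. -/
theorem markov_corollary
    (p : Polynomial ℝ) (d k : ℕ)
    (hd : p.natDegree = d) (hd1 : 1 ≤ d) (hk : 1 ≤ k)
    (hbound : ∀ j : ℕ, j ≤ k → |p.eval (j : ℝ)| ≤ 1)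
    (hbig : ∃ x ∈ Set.Icc (0 : ℝ) k, |p.eval x| ≥ 1.001) :
    (d : ℝ) ≥ Real.sqrt (0.001 * k / 2.002) :=
  MarkovAux.markov_corollary' p d k hd hd1 hk hbound hbig
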